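/- A Z-reduced form g lies in μ(G⁺) if and only if its bead sequence β(g) begins with the quotient 1, and g lies in μ(G⁻) if and only if β(g) ends with the quotient 1; that is, μ(G⁺) = β⁻¹(η⁺(S₁)) and μ(G⁻) = β⁻¹(η⁻(S₁)). -/

import Mathlib

/-- A binary quadratic form `A x² + B x y + C y²` with integer coefficients. -/
structure QF where
  a : ℤ
  b : ℤ
  c : ℤ

/-- The discriminant `B² - 4AC` of a form. -/
def QF.disc (f : QF) : ℤ := f.b ^ 2 - 4 * f.a * f.c

/-- The action of a matrix `[[α, β], [γ, δ]]` on a form: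
`f(x,y) ↦ f(αx + βy, γx + δy)`. -/
def QF.transform (f : QF) (α β γ δ : ℤ) : QF :=
  ⟨f.a * α ^ 2 + f.b * α * γ + f.c * γ ^ 2,
   2 * f.a * α * β + f.b * (α * δ + β * γ) + 2 * f.c * γ * δ,
   f.a * β ^ 2 + f.b * β * δ + f.c * δ ^ 2⟩

/-- A form is indefinite if its discriminant is positive and not a perfect square. -/
def QF.IsIndefinite (f : QF) : Prop := 0 < f.disc ∧ ¬ IsSquare f.disc

/-- An indefinite form `(A,B,C)` is Z-reduced if `A,B,C > 0` and `B > A + C`. -/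
def QF.IsZReduced (f : QF) : Prop :=
  f.IsIndefinite ∧ 0 < f.a ∧ 0 < f.b ∧ 0 < f.c ∧ f.a + f.c < f.b

/-- An indefinite form `(A,B,C)` is G-reduced if `AC < 0` and `B > |A + C|`. -/
def QF.IsGReduced (f : QF) : Prop :=
  f.IsIndefinite ∧ f.a * f.c < 0 ∧ |f.a + f.c| < f.b

/-- G-reduced with `A > 0`. -/
def QF.IsGPlus (f : QF) : Prop := f.IsGReduced ∧ 0 < f.a

/-- G-reduced with `A < 0`. -/
def QF.IsGMinus (f : QF) : Prop := f.IsGReduced ∧ f.a < 0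

/-- `(t, u)` is the fundamental solution of `|t² - Δ u²| = 4`:
a solution in positive integers with `u` minimal. -/
def IsFundSol (Δ t u : ℤ) : Prop :=
  0 < t ∧ 0 < u ∧ |t ^ 2 - Δ * u ^ 2| = 4 ∧
    ∀ t' u' : ℤ, 0 < t' → 0 < u' → |t' ^ 2 - Δ * u' ^ 2| = 4 → u ≤ u'

/-- The continuant of a finite sequence of integers. -/
def cont : List ℤ → ℤ
  | [] => 1
  | [q] => q
  | q :: r :: t => q * cont (r :: t) + cont t

/-- `L` is the list of partial quotients of a regular continued fraction expansion of
the rational number `x`: all partial quotients are positive and the value of the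
continued fraction, namely `cont L / cont L.tail`, equals `x`. -/
def IsCF (x : ℚ) (L : List ℤ) : Prop :=
  L ≠ [] ∧ (∀ q ∈ L, 0 < q) ∧ (cont L : ℚ) = x * cont L.tail

/-- The bead sequence `β(f)` of a Z-reduced form `f = (A,B,C)` of discriminant `Δ`:
with `(t,u)` the fundamental solution of `|t² - Δu²| = 4` and `z = (t + Bu)/2`,
it is the continued fraction expansion of `z/(z - Au)` whose number of partial
quotients is even if `t² - Δu² = -4` and odd otherwise. -/
def QF.IsBeta (f : QF) (L : List ℤ) : Prop :=
  ∃ t u : ℤ, IsFundSol f.disc t u ∧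
    IsCF ((((t + f.b * u : ℤ) : ℚ) / 2) / ((((t + f.b * u : ℤ) : ℚ) / 2) - ((f.a * u : ℤ) : ℚ))) L ∧
    (t ^ 2 - f.disc * u ^ 2 = -4 → Even L.length) ∧
    (t ^ 2 - f.disc * u ^ 2 = 4 → Odd L.length)

/-- Dirichlet's map `γ(f)` for `f = (A,B,C)` in `G⁺` of discriminant `Δ`:
with `(t,u)` the fundamental solution of `|t² - Δu²| = 4` and `z = (t + Bu)/2`,
it is the continued fraction expansion of `z/(Au)` whose number of partial
quotients is odd if `t² - Δu² = -4` and even otherwise. -/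
def QF.IsGamma (f : QF) (L : List ℤ) : Prop :=
  ∃ t u : ℤ, IsFundSol f.disc t u ∧
    IsCF ((((t + f.b * u : ℤ) : ℚ) / 2) / ((f.a * u : ℤ) : ℚ)) L ∧
    (t ^ 2 - f.disc * u ^ 2 = -4 → Odd L.length) ∧
    (t ^ 2 - f.disc * u ^ 2 = 4 → Even L.length)

/-- The stars-and-bars map: `(q₁, …, q_l)` is sent to the binary string of length
`q₁ + ⋯ + q_l - 1` whose `j`-th character is `1` exactly at the partial sums
`q₁, q₁ + q₂, …, q₁ + ⋯ + q_{l-1}`. -/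
def sb : List ℤ → List Bool
  | [] => []
  | [q] => List.replicate (q - 1).toNat false
  | q :: r :: t => List.replicate (q - 1).toNat false ++ true :: sb (r :: t)

/-- `σ(f) = sb(β(f))`. -/
def QF.IsSigma (f : QF) (s : List Bool) : Prop :=
  ∃ L : List ℤ, f.IsBeta L ∧ s = sb L

/-- Zagier's reduction operator: `f ↦ f(nx + y, -x)` with `n = ⌈(B + √Δ)/(2A)⌉`. -/
noncomputable def RZ (f : QF) : QF :=
  f.transform ⌈((f.b : ℝ) + Real.sqrt (f.disc : ℝ)) / (2 * (f.a : ℝ))⌉ 1 (-1) 0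

/-- The number `δ` in Gauss's reduction operator: `|δ| = ⌊(B + √Δ)/(2|A|)⌋` with
`δ` having the sign of `A`. -/
noncomputable def gaussDelta (f : QF) : ℤ :=
  f.a.sign * ⌊((f.b : ℝ) + Real.sqrt (f.disc : ℝ)) / (2 * |(f.a : ℝ)|)⌋

/-- Gauss's reduction operator: `f ↦ f(δx + y, -x)`. -/
noncomputable def RG (f : QF) : QF := f.transform (gaussDelta f) 1 (-1) 0

/-- Add `1` to the last entry of a list. -/
def addLast : List ℤ → List ℤ
  | [] => []
  | [q] => [q + 1]
  | q :: r :: t => q :: addLast (r :: t)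

/-- Subtract `1` from the last entry of a list. -/
def subLast : List ℤ → List ℤ
  | [] => []
  | [q] => [q - 1]
  | q :: r :: t => q :: subLast (r :: t)

/-- Subtract `1` from the first entry of a list. -/
def decHead : List ℤ → List ℤ
  | [] => []
  | q :: t => (q - 1) :: t

/-- The operator `T_Z`: `(q₁,…,q_l) ↦ (q₁-1, q₂, …, q_{l-1}, q_l+1)` if `q₁ ≥ 2`;
`(q₂, q₁)` if `q₁ = 1` and `l = 2`; `(q₃, …, q_l, q₂, q₁)` if `q₁ = 1` and `l > 2`. -/
def TZ : List ℤ → List ℤ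
  | [] => []
  | [q] => [q]
  | q :: r :: s => if q = 1 then s ++ [r, 1] else (q - 1) :: addLast (r :: s)

/-- The map `μ` from G-reduced forms to Z-reduced forms. -/
def mu (f : QF) : QF :=
  if 0 < f.a then ⟨f.a, 2 * f.a + f.b, f.a + f.b + f.c⟩
  else ⟨f.a + f.b + f.c, f.b + 2 * f.c, f.c⟩

/-- The section `τ` of `β`: `τ((q₁,…,q_l)) = (A,B,C)` with `A = [q₁-1, q₂, …, q_l]`,
`C = [q₁, …, q_{l-1}, q_l - 1]`, `B = [q₁,…,q_l] + [q₁-1, q₂, …, q_{l-1}, q_l-1]`. -/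
def tau (L : List ℤ) : QF :=
  ⟨cont (decHead L), cont L + cont (subLast (decHead L)), cont (subLast L)⟩

/-- Multiply all coefficients of a form by `u`. -/
def QF.smul (u : ℤ) (f : QF) : QF := ⟨u * f.a, u * f.b, u * f.c⟩

/-- The reversal `(A,B,C)^R = (C,B,A)`. -/
def QF.rev (f : QF) : QF := ⟨f.c, f.b, f.a⟩

/-- The map `ρ((A,B,C)) = (-A, B, -C)`. -/
def rho (f : QF) : QF := ⟨-f.a, f.b, -f.c⟩

/-- A form is primitive if its coefficients have gcd 1. -/
def IsPrimitiveForm (f : QF) : Prop := Int.gcd f.a (Int.gcd f.b f.c) = 1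

/-- `SL₂(ℤ)`-equivalence of forms. -/
def FormEquiv (f g : QF) : Prop :=
  ∃ α β γ δ : ℤ, α * δ - β * γ = 1 ∧ g = f.transform α β γ δ

/-- A nonempty string is primitive if it differs from all of its nontrivial cyclic
shifts. -/
def PrimitiveList {α : Type*} (l : List α) : Prop :=
  l ≠ [] ∧ ∀ n, 0 < n → n < l.length → l.rotate n ≠ l

/-- The continuant `[q₂, …, q_{l-1}]` of the interior of a list, with the convention
that it is `0` for a list of length `≤ 1`. -/
def innerCont (L : List ℤ) : ℤ := if L.length ≤ 1 then 0 else cont (L.tail.dropLast)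

/-- The section `ξ` of `γ`: `ξ((q₁,…,q_l)) = (A,B,C)` with `A = [q₂,…,q_l]`,
`B = [q₁,…,q_l] - [q₂,…,q_{l-1}]`, `C = -[q₁,…,q_{l-1}]`. -/
def xiForm (L : List ℤ) : QF := ⟨cont L.tail, cont L - innerCont L, -(cont L.dropLast)⟩

/-- `p` is the minimal period of the purely periodic sequence `d`. -/
def IsMinPeriod {α : Type*} [Inhabited α] (d : ℕ → α) (p : List α) : Prop :=
  p ≠ [] ∧ (∀ n, d n = p.getD (n % p.length) default) ∧
    ∀ m, 0 < m → (∀ n, d (n + m) = d n) → p.length ≤ m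

/-- `d` is the sequence of partial quotients of the Denjoy continued fraction of `x`
(`true` = quotient 1, `false` = quotient 0): `ξ₀ = x`, `qₙ = 0` if `ξ_{n-1} < 1`,
`qₙ = 1` if `ξ_{n-1} > 1`, and `ξₙ = 1/(ξ_{n-1} - qₙ)`. -/
def IsDenjoySeq (x : ℝ) (d : ℕ → Bool) : Prop :=
  ∃ ξ : ℕ → ℝ, ξ 0 = x ∧
    ∀ n, ((ξ n < 1 ∧ d n = false) ∨ (1 < ξ n ∧ d n = true)) ∧
      ξ (n + 1) = 1 / (ξ n - if d n then 1 else 0)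

/-- `a` is the sequence of partial quotients of the regular continued fraction of `x`. -/
def IsRegCFSeq (x : ℝ) (a : ℕ → ℤ) : Prop :=
  ∃ ξ : ℕ → ℝ, ξ 0 = x ∧ ∀ n, a n = ⌊ξ n⌋ ∧ ξ (n + 1) = 1 / (ξ n - (a n : ℝ))

/-- Regular-to-Denjoy conversion: each partial quotient `q` becomes the string
`1 0 1 0 ⋯ 0 1` of `q` ones alternating with `q - 1` zeroes. -/
def regToDen (L : List ℤ) : List Bool :=
  (L.map fun q => true :: (List.replicate (q - 1).toNat [false, true]).flatten).flatten

/-- Replace each character `0` by the two characters `01`. -/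
def expand01 (s : List Bool) : List Bool :=
  (s.map fun b => if b then [true] else [false, true]).flatten

/-- A quadratic irrational. -/
def IsQuadIrrational (x : ℝ) : Prop :=
  Irrational x ∧ ∃ a b c : ℤ, a ≠ 0 ∧ (a : ℝ) * x ^ 2 + (b : ℝ) * x + (c : ℝ) = 0


section Infra
open Matrix

lemma cont_cons (q r : ℤ) (t : List ℤ) : cont (q :: r :: t) = q * cont (r :: t) + cont t := rfl

lemma cont_pos : ∀ {L : List ℤ}, (∀ q ∈ L, 0 < q) → 0 < cont L
  | [], _ => by simp [cont]
  | [q], h => by simpa [cont] using h q (by simp)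
  | q :: r :: t, h => by
    have h1 : 0 < cont (r :: t) := cont_pos (fun x hx => h x (List.mem_cons_of_mem q hx))
    have h2 : 0 < cont t := cont_pos (fun x hx => h x (by simp [hx]))
    have hq : 0 < q := h q (by simp)
    rw [cont_cons]; nlinarith

lemma cont_tail_le {L : List ℤ} (h : ∀ q ∈ L, 0 < q) : cont L.tail ≤ cont L := by
  match L with
  | [] => simp
  | [q] => have := h q (by simp); simp only [cont, List.tail_cons]; omega
  | q :: r :: t =>
    have h1 : 0 < cont (r :: t) := cont_pos (fun x hx => h x (List.mem_cons_of_mem q hx))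
    have h2 : 0 < cont t := cont_pos (fun x hx => h x (by simp [hx]))
    have hq : 0 < q := h q (by simp)
    rw [cont_cons]; simp only [List.tail_cons]; nlinarith

lemma cont_tail_lt {q r : ℤ} {t : List ℤ} (h : ∀ x ∈ q :: r :: t, 0 < x) :
    cont (r :: t) < cont (q :: r :: t) := by
  have h1 : 0 < cont (r :: t) := cont_pos (fun x hx => h x (List.mem_cons_of_mem q hx))
  have h2 : 0 < cont t := cont_pos (fun x hx => h x (by simp [hx]))
  have hq : 0 < q := h q (by simp)
  rw [cont_cons]; nlinarith

lemma eq_one_of_cont_tail_eq {L : List ℤ} (hne : L ≠ []) (h : ∀ q ∈ L, 0 < q)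
    (heq : cont L.tail = cont L) : L = [1] := by
  match L with
  | [q] => simp [cont] at heq; simp [heq.symm]
  | q :: r :: t => exact absurd heq (by have := cont_tail_lt h; simp only [List.tail_cons]; omega)

/-- the 2x2 matrix of a partial quotient -/
def Mq (q : ℤ) : Matrix (Fin 2) (Fin 2) ℤ := !![q, 1; 1, 0]

/-- product of the matrices of a list -/
def Pm (L : List ℤ) : Matrix (Fin 2) (Fin 2) ℤ := (L.map Mq).prod

lemma Pm_nil : Pm [] = 1 := rfl

lemma Pm_cons (q : ℤ) (T : List ℤ) : Pm (q :: T) = Mq q * Pm T := by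
  simp [Pm, List.prod_cons]

lemma Pm_append (A B : List ℤ) : Pm (A ++ B) = Pm A * Pm B := by
  simp [Pm, List.prod_append]

lemma Pm_eq : ∀ {L : List ℤ}, L ≠ [] →
    Pm L = !![cont L, cont L.dropLast; cont L.tail, innerCont L]
  | [], h => absurd rfl h
  | [q], _ => by
      simp [Pm_cons, Pm_nil, Mq, cont, innerCont]
  | q :: r :: t, _ => by
      have ih := Pm_eq (L := r :: t) (by simp)
      rw [Pm_cons, ih, Mq, Matrix.mul_fin_two]
      have h00 : cont (q :: r :: t) = q * cont (r :: t) + cont (r :: t).tail := rfl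
      have h10 : cont ((q :: r :: t).tail) = cont (r :: t) := rfl
      have h11 : innerCont (q :: r :: t) = cont ((r :: t).dropLast) := by
        simp [innerCont]
      have h01 : cont ((q :: r :: t).dropLast) =
          q * cont ((r :: t).dropLast) + innerCont (r :: t) := by
        match t with
        | [] => simp [cont, innerCont]
        | s :: t' =>
          have : (q :: r :: s :: t').dropLast = q :: (r :: s :: t').dropLast := by simp
          rw [this]
          have hdl : (r :: s :: t').dropLast = r :: (s :: t').dropLast := by simp
          have hne2 : (s :: t').dropLast ≠ [] ∨ (s :: t').dropLast = [] := by tauto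
          rcases hne2 with hne2 | hne2
          · match hdm : (s :: t').dropLast with
            | [] => exact absurd hdm hne2
            | x :: y =>
              rw [hdl, hdm, cont_cons, innerCont]
              simp [hdm]
          · rw [hdl, hne2]
            simp [cont, innerCont, hne2]
      rw [h00, h10, h11, h01]
      simp only [List.tail_cons]
      ring_nf

lemma Mq_transpose (q : ℤ) : (Mq q)ᵀ = Mq q := by
  ext i j; fin_cases i <;> fin_cases j <;> simp [Mq]

lemma Pm_reverse : ∀ (L : List ℤ), Pm L.reverse = (Pm L)ᵀ
  | [] => by simp [Pm_nil]
  | q :: T => by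
    have h1 : Pm [q] = Mq q := by simp [Pm_cons, Pm_nil]
    rw [List.reverse_cons, Pm_append, Pm_reverse T, h1, Pm_cons, Matrix.transpose_mul, Mq_transpose]

lemma Pm_det : ∀ (L : List ℤ), (Pm L).det = (-1) ^ L.length
  | [] => by simp [Pm_nil]
  | q :: T => by
    rw [Pm_cons, Matrix.det_mul, Pm_det T]
    simp [Mq, Matrix.det_fin_two_of, pow_succ]

lemma cont_entry_00 {L : List ℤ} (h : L ≠ []) : (Pm L) 0 0 = cont L := by
  rw [Pm_eq h]; simp

lemma cont_entry_10 {L : List ℤ} (h : L ≠ []) : (Pm L) 1 0 = cont L.tail := by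
  rw [Pm_eq h]; simp

lemma cont_entry_01 {L : List ℤ} (h : L ≠ []) : (Pm L) 0 1 = cont L.dropLast := by
  rw [Pm_eq h]; simp

lemma cont_reverse (L : List ℤ) : cont L.reverse = cont L := by
  rcases eq_or_ne L [] with rfl | h
  · simp
  · have hr : L.reverse ≠ [] := by simpa using h
    rw [← cont_entry_00 hr, Pm_reverse, Matrix.transpose_apply, cont_entry_00 h]

lemma cont_reverse_tail {L : List ℤ} (h : L ≠ []) : cont L.reverse.tail = cont L.dropLast := by
  have hr : L.reverse ≠ [] := by simpa using h
  rw [← cont_entry_10 hr, Pm_reverse, Matrix.transpose_apply, cont_entry_01 h]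

lemma cont_det {L : List ℤ} (h : L ≠ []) :
    cont L * innerCont L - cont L.dropLast * cont L.tail = (-1) ^ L.length := by
  have := Pm_det L
  rw [Pm_eq h] at this
  simpa [Matrix.det_fin_two_of] using this

lemma cont_dropLast_le {L : List ℤ} (h : ∀ q ∈ L, 0 < q) : cont L.dropLast ≤ cont L := by
  rcases eq_or_ne L [] with rfl | hne
  · simp
  · rw [← cont_reverse_tail hne, ← cont_reverse L]
    exact cont_tail_le (fun q hq => h q (by simpa using hq))

end Infra
section MkCF

/-- Euclidean continued fraction algorithm. -/
def mkCF : ℕ → ℕ → List ℤ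
  | _, 0 => []
  | p, 1 => [(p : ℤ)]
  | p, (q+2) => ((p / (q+2) : ℕ) : ℤ) :: mkCF (q+2) (p % (q+2))
  decreasing_by exact Nat.mod_lt _ (by omega)

lemma mkCF_spec : ∀ q p : ℕ, 1 ≤ q → q < p →
    mkCF p q ≠ [] ∧ (∀ x ∈ mkCF p q, 0 < x) ∧
    (q : ℤ) * cont (mkCF p q) = (p : ℤ) * cont (mkCF p q).tail ∧
    (∀ m, (mkCF p q).getLast? = some m → 2 ≤ m) ∧
    (mkCF p q).head? = some ((p / q : ℕ) : ℤ) := by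
  intro q
  induction q using Nat.strong_induction_on with
  | _ q ih =>
    intro p hq hpq
    match q with
    | 1 =>
      refine ⟨by simp [mkCF], ?_, ?_, ?_, ?_⟩
      · intro x hx; simp [mkCF] at hx; subst hx; exact_mod_cast by omega
      · simp [mkCF, cont]
      · intro m hm; simp [mkCF] at hm; omega
      · simp [mkCF]
    | (q+2) =>
      have hdm := Nat.div_add_mod p (q+2)
      rcases Nat.eq_zero_or_pos (p % (q+2)) with hr | hr
      · -- exact division
        have hL : mkCF p (q+2) = [((p / (q+2) : ℕ) : ℤ)] := by
          rw [mkCF, hr, mkCF]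
        have hd2 : 2 ≤ p / (q+2) := by
          by_contra h
          have h1 : p / (q+2) ≤ 1 := by omega
          have : (q+2) * (p / (q+2)) ≤ (q+2) * 1 := Nat.mul_le_mul_left _ h1
          omega
        refine ⟨by simp [hL], ?_, ?_, ?_, ?_⟩
        · intro x hx; simp [hL] at hx; subst hx; exact_mod_cast by omega
        · have hpn : (q+2) * (p / (q+2)) = p := by rw [hr] at hdm; simpa using hdm
          have hp : ((q+2 : ℕ):ℤ) * ((p / (q+2) : ℕ):ℤ) = (p:ℤ) := by exact_mod_cast hpn
          rw [hL]
          simpa [cont] using hp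
        · intro m hm; simp [hL] at hm; subst hm; exact_mod_cast hd2
        · simp [hL]
      · -- proper remainder
        have hrec : mkCF p (q+2) = ((p / (q+2) : ℕ) : ℤ) :: mkCF (q+2) (p % (q+2)) := by
          rw [mkCF]
        have hlt : p % (q+2) < q + 2 := Nat.mod_lt _ (by omega)
        obtain ⟨ihne, ihpos, ihval, ihlast, _⟩ := ih (p % (q+2)) hlt (q+2) hr hlt
        have hd1 : 1 ≤ p / (q+2) := (Nat.one_le_div_iff (by omega)).2 (by omega)
        set T := mkCF (q+2) (p % (q+2)) with hT
        have hcc : cont (((p / (q+2) : ℕ) : ℤ) :: T)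
            = ((p / (q+2) : ℕ) : ℤ) * cont T + cont T.tail := by
          obtain ⟨r, t, hTrt⟩ := List.exists_cons_of_ne_nil ihne
          rw [hTrt]; rfl
        refine ⟨by simp [hrec], ?_, ?_, ?_, ?_⟩
        · intro x hx
          rw [hrec] at hx
          rcases List.mem_cons.1 hx with h | h
          · subst h; exact_mod_cast hd1
          · exact ihpos x h
        · rw [hrec, hcc]
          simp only [List.tail_cons]
          have hdmz : ((q+2:ℕ):ℤ) * ((p / (q+2) : ℕ):ℤ) + ((p % (q+2) : ℕ):ℤ) = (p:ℤ) := by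
            exact_mod_cast hdm
          push_cast at hdmz ihval ⊢
          linear_combination (-1 : ℤ) * ihval + cont T * hdmz
        · intro m hm
          obtain ⟨r, t, hTrt⟩ := List.exists_cons_of_ne_nil ihne
          rw [hrec, hTrt, List.getLast?_cons_cons] at hm
          exact ihlast m (by rw [hTrt]; exact hm)
        · simp [hrec]

end MkCF
section Flip
open Matrix

lemma subLast_append (M : List ℤ) (m : ℤ) : subLast (M ++ [m]) = M ++ [m-1] := by
  induction M with
  | nil => rfl
  | cons q M ih =>
    cases M with
    | nil => rfl
    | cons r t => simpa [subLast, List.cons_append] using ih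

lemma Pm_single (q : ℤ) : Pm [q] = Mq q := by simp [Pm_cons, Pm_nil]

lemma flip_spec {L : List ℤ} (hne : L ≠ []) (hpos : ∀ x ∈ L, 0 < x)
    (hlast : ∀ m, L.getLast? = some m → 2 ≤ m) :
    cont (subLast L ++ [1]) = cont L ∧ (cont (subLast L ++ [1]).tail = cont L.tail ∧
    (∀ x ∈ subLast L ++ [1], 0 < x) ∧ (subLast L ++ [1]).length = L.length + 1 ∧
    (2 ≤ L.length → (subLast L ++ [1]).head? = L.head?)) := by
  obtain ⟨M, m, rfl⟩ : ∃ M m, L = M ++ [m] := by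
    rcases List.eq_nil_or_concat L with h | ⟨M, m, h⟩
    · exact absurd h hne
    · exact ⟨M, m, by simpa [List.concat_eq_append] using h⟩
  have hm : 2 ≤ m := hlast m (by simp)
  have hsl : subLast (M ++ [m]) ++ [1] = M ++ [m-1, 1] := by
    rw [subLast_append]
    simp
  have hX : Mq (m-1) * Mq 1 = !![m, m-1; 1, 1] := by
    simp [Mq, Matrix.mul_fin_two]
  have hP1 : Pm (M ++ [m-1, 1]) = Pm M * !![m, m-1; 1, 1] := by
    rw [show (M ++ [m-1,1]) = M ++ ([m-1] ++ [1]) by simp, Pm_append, Pm_append,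
      Pm_single, Pm_single, hX]
  have hP0 : Pm (M ++ [m]) = Pm M * Mq m := by rw [Pm_append, Pm_single]
  have hcol : ∀ i, (Pm M * !![m, m-1; 1, 1]) i 0 = (Pm M * Mq m) i 0 := by
    intro i
    simp [Matrix.mul_apply, Fin.sum_univ_two, Mq]
  have hne1 : M ++ [m-1, 1] ≠ [] := by simp
  have hne0 : M ++ [m] ≠ [] := by simp
  refine ⟨?_, ?_, ?_, ?_, ?_⟩
  · rw [hsl, ← cont_entry_00 hne1, ← cont_entry_00 hne0, hP1, hP0, hcol]
  · rw [hsl, ← cont_entry_10 hne1, ← cont_entry_10 hne0, hP1, hP0, hcol]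
  · intro x hx
    rw [hsl] at hx
    rcases List.mem_append.1 hx with h | h
    · exact hpos x (List.mem_append_left _ h)
    · simp at h
      rcases h with h | h <;> omega
  · rw [hsl]; simp
  · intro hlen
    have hMne : M ≠ [] := by
      intro h; subst h; simp at hlen
    obtain ⟨a, M', rfl⟩ := List.exists_cons_of_ne_nil hMne
    rw [hsl]; simp

end Flip
section Key

lemma trip_le {x s u : ℤ} (hx : 1 ≤ x) (hs : s ≤ -1) : x*s*u^2 ≤ -u^2 := by
  have h1 : x*s ≤ -1 := by
    nlinarith [mul_le_mul_of_nonneg_left hs (by linarith : (0:ℤ) ≤ x)]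
  have h2 := mul_le_mul_of_nonneg_right h1 (sq_nonneg u)
  nlinarith [h2]

lemma trip_ge {x s u : ℤ} (hx : 1 ≤ x) (hs : 1 ≤ s) : u^2 ≤ x*s*u^2 := by
  have h1 : 1 ≤ x*s := by nlinarith
  have h2 := mul_le_mul_of_nonneg_right h1 (sq_nonneg u)
  nlinarith [h2]

lemma key_sq {a b c t u e z : ℤ} (hpell : t^2 - (b^2-4*a*c)*u^2 = 4*e) (hz : 2*z = t + b*u) :
    z^2 - b*u*z + a*c*u^2 = e := by
  have h4 : 4*z^2 - 4*(b*u)*z + 4*(a*c)*u^2 = 4*e := by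
    linear_combination hpell + (2*z - b*u + t) * hz
  linarith

lemma key_prod {a b c t u e z : ℤ} (hpell : t^2 - (b^2-4*a*c)*u^2 = 4*e) (hz : 2*z = t + b*u) :
    (2*a*u - z) * (2*a*u - (b*u - z)) = a*(4*a-2*b+c)*u^2 - e := by
  have hq := key_sq hpell hz
  linear_combination -1 * hq

lemma keyA {a b c t u e z : ℤ} (ha : 0 < a) (hc : 0 < c) (hb : a + c < b) (ht : 0 < t)
    (hu : 0 < u) (he : e = 1 ∨ e = -1) (hpell : t^2 - (b^2-4*a*c)*u^2 = 4*e)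
    (hz : 2*z = t + b*u) : a*u + 1 ≤ z := by
  by_contra h
  push_neg at h
  have hzau : z ≤ a*u := by omega
  have h1 : t ≤ (2*a - b)*u := by nlinarith
  have h2 : 1 ≤ 2*a - b := by nlinarith
  have h3 : t^2 ≤ ((2*a-b)*u)^2 := by nlinarith
  have hu2 : 1 ≤ u^2 := by nlinarith
  have h4 : 4*e ≤ 4*(a*(a-b+c))*u^2 := by nlinarith
  have h5 : a*(a-b+c)*u^2 ≤ -u^2 := trip_le (by linarith) (by linarith)
  have he1 : e = -1 := by
    rcases he with rfl|rfl
    · linarith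
    · rfl
  subst he1
  have hu2' : u^2 ≤ 1 := by linarith
  have hu1 : u = 1 := by nlinarith [sq_nonneg (u-1)]
  subst hu1
  have ha1 : a ≤ 1 := by
    nlinarith [mul_le_mul_of_nonneg_left (show a-b+c ≤ -1 by linarith)
      (show (0:ℤ) ≤ a by linarith)]
  have ha1' : a = 1 := by omega
  subst ha1'
  have hge : -1 ≤ 1-b+c := by nlinarith
  have hle : 1-b+c ≤ -1 := by omega
  have : t ≤ 2 - b := by nlinarith
  omega

lemma keyPos {a b c t u e z : ℤ} (ha : 0 < a) (hc : 0 < c) (hb : a + c < b) (ht : 0 < t)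
    (hu : 0 < u) (he : e = 1 ∨ e = -1) (hpell : t^2 - (b^2-4*a*c)*u^2 = 4*e)
    (hz : 2*z = t + b*u) (h : 4*a-2*b+c ≤ -1) :
    2*a*u ≤ z ∧ (z = 2*a*u → e = -1) := by
  have hp := key_prod (a := a) (c := c) hpell hz
  have hu2 : 1 ≤ u^2 := by nlinarith
  have htrip : a*(4*a-2*b+c)*u^2 ≤ -u^2 := trip_le (by linarith) h
  have hR : a*(4*a-2*b+c)*u^2 - e ≤ 0 := by rcases he with rfl|rfl <;> linarith
  constructor
  · by_contra h2
    push_neg at h2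
    have hX : 1 ≤ 2*a*u - z := by omega
    have hY : 2*a*u - (b*u - z) = (2*a*u - z) + t := by linarith
    have hL : 2 ≤ (2*a*u - z) * (2*a*u - (b*u - z)) := by
      rw [hY]
      nlinarith [mul_le_mul_of_nonneg_right hX (show (0:ℤ) ≤ (2*a*u-z)+t by linarith)]
    linarith
  · intro hz0
    have hp0 : (0:ℤ) = a*(4*a-2*b+c)*u^2 - e := by
      rw [hz0] at hp; linear_combination hp
    rcases he with rfl|rfl
    · linarith
    · rfl

lemma keyNeg {a b c t u e z : ℤ} (ha : 0 < a) (hc : 0 < c) (hb : a + c < b) (ht : 0 < t)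
    (hu : 0 < u) (he : e = 1 ∨ e = -1) (hpell : t^2 - (b^2-4*a*c)*u^2 = 4*e)
    (hz : 2*z = t + b*u) (h : 1 ≤ 4*a-2*b+c) :
    z ≤ 2*a*u ∧ (z = 2*a*u → e = 1) := by
  have hp := key_prod (a := a) (c := c) hpell hz
  have hu2 : 1 ≤ u^2 := by nlinarith
  have hb4 : b ≤ 3*a - 2 := by omega
  have hY : 1 ≤ 2*a*u - (b*u - z) := by
    have h2Y : 2*(2*a*u - (b*u - z)) = (4*a-b)*u + t := by linarith
    have h3 : 1*u ≤ (4*a-b)*u := mul_le_mul_of_nonneg_right (by linarith) (le_of_lt hu)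
    omega
  have htrip : u^2 ≤ a*(4*a-2*b+c)*u^2 := trip_ge (by linarith) h
  have hR : 0 ≤ a*(4*a-2*b+c)*u^2 - e := by rcases he with rfl|rfl <;> linarith
  constructor
  · by_contra h2
    push_neg at h2
    have hX : 2*a*u - z ≤ -1 := by omega
    have hXY : (2*a*u - z) * (2*a*u - (b*u - z)) ≤ -1 := by
      nlinarith [mul_le_mul_of_nonneg_right hX (by linarith : (0:ℤ) ≤ 2*a*u - (b*u - z))]
    linarith
  · intro hz0
    have hp0 : (0:ℤ) = a*(4*a-2*b+c)*u^2 - e := by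
      rw [hz0] at hp; linear_combination hp
    rcases he with rfl|rfl
    · rfl
    · linarith

lemma keyNe {a b c t u e : ℤ} (hΔ : 0 < b^2-4*a*c) (ht : 0 < t) (hu : 0 < u)
    (he : e = 1 ∨ e = -1) (hpell : t^2 - (b^2-4*a*c)*u^2 = 4*e) :
    4*a-2*b+c ≠ 0 := by
  intro h0
  set n := (b - 4*a)*u with hn_def
  have hn : n^2 = (b^2-4*a*c)*u^2 := by
    rw [hn_def]; linear_combination (4*a*u^2) * h0
  have h1 : t^2 - n^2 = 4*e := by rw [hn]; exact hpell
  have hu2 : 1 ≤ u^2 := by nlinarith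
  have hΔu : 1 ≤ (b^2-4*a*c)*u^2 := by nlinarith
  have habs0 := abs_nonneg n
  have hsqa : |n|^2 = n^2 := sq_abs n
  rcases he with rfl|rfl
  · have habs : |n| < t := by nlinarith
    have hf : (t - |n|) * (t + |n|) = 4 := by nlinarith
    have hA1 : 1 ≤ t - |n| := by omega
    have hA2 : t - |n| ≤ 2 := by nlinarith
    have h2 : t - |n| = 1 ∨ t - |n| = 2 := by omega
    rcases h2 with h2 | h2
    · rw [h2, one_mul] at hf; omega
    · rw [h2] at hf
      have hn0 : n = 0 := by
        have : |n| = 0 := by omega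
        exact abs_eq_zero.mp this
      rw [hn0] at hn
      simp at hn
      omega
  · have habs : t < |n| := by nlinarith
    have hf : (|n| - t) * (|n| + t) = 4 := by nlinarith
    have hA1 : 1 ≤ |n| - t := by omega
    have hA2 : |n| - t ≤ 2 := by nlinarith
    have h2 : |n| - t = 1 ∨ |n| - t = 2 := by omega
    rcases h2 with h2 | h2
    · rw [h2, one_mul] at hf; omega
    · rw [h2] at hf
      omega

end Key
section Fund

lemma exists_fundSol {Δ : ℤ} (h0 : 0 < Δ) (hns : ¬ IsSquare Δ) :
    ∃ t u : ℤ, IsFundSol Δ t u := by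
  classical
  obtain ⟨x, y, hxy, hy⟩ := Pell.exists_of_not_isSquare h0 hns
  have hP : ∃ n : ℕ, 0 < n ∧ ∃ t : ℤ, 0 < t ∧ |t^2 - Δ * (n:ℤ)^2| = 4 := by
    refine ⟨2 * y.natAbs, by positivity, 2 * |x|, ?_, ?_⟩
    · have : x ≠ 0 := by intro h; rw [h] at hxy; nlinarith [sq_nonneg y]
      positivity
    · have hcast : ((2 * y.natAbs : ℕ) : ℤ) = 2 * |y| := by
        push_cast [Int.natCast_natAbs]
        ring
      rw [hcast]
      have hval : (2*|x|)^2 - Δ * (2*|y|)^2 = 4 := by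
        rw [mul_pow, mul_pow, sq_abs, sq_abs]
        linear_combination 4 * hxy
      rw [hval]
      rfl
  obtain ⟨hu0, t, ht0, htt⟩ := Nat.find_spec hP
  refine ⟨t, (Nat.find hP : ℤ), ht0, by exact_mod_cast hu0, htt, ?_⟩
  intro t' u' ht' hu' heq
  have hmem : 0 < u'.toNat ∧ ∃ s : ℤ, 0 < s ∧ |s^2 - Δ * ((u'.toNat : ℕ):ℤ)^2| = 4 := by
    constructor
    · omega
    · exact ⟨t', ht', by rwa [Int.toNat_of_nonneg (le_of_lt hu')]⟩
  have := Nat.find_min' hP hmem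
  omega

lemma exists_half {a b c t u e : ℤ} (hpell : t^2 - (b^2-4*a*c)*u^2 = 4*e) :
    ∃ z : ℤ, 2*z = t + b*u := by
  have h2 : (t+b*u)^2 = 2*(b^2*u^2 - 2*a*c*u^2 + 2*e + t*b*u) := by linear_combination hpell
  have hev : Even ((t+b*u)^2) := ⟨b^2*u^2 - 2*a*c*u^2 + 2*e + t*b*u, by linarith⟩
  have he : Even (t+b*u) := (Int.even_pow.mp hev).1
  obtain ⟨z, hz⟩ := he
  exact ⟨z, by omega⟩

end Fund
section CF

lemma cf_head_one {x : ℚ} {L : List ℤ} (h : IsCF x L) (hh : L.head? = some 1) :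
    x ≤ 2 ∧ (x = 2 → L = [1, 1]) := by
  obtain ⟨hne, hpos, hval⟩ := h
  match L with
  | [] => exact absurd rfl hne
  | q :: T =>
    have hq1 : q = 1 := by simpa using hh
    subst hq1
    match T with
    | [] =>
      simp [cont] at hval
      constructor
      · rw [← hval]; norm_num
      · intro h2; rw [← hval] at h2; norm_num at h2
    | r :: s =>
      have hposT : ∀ y ∈ r :: s, 0 < y := fun y hy => hpos y (List.mem_cons_of_mem _ hy)
      have hct : 0 < cont (r :: s) := cont_pos hposT
      have hts : cont (r :: s).tail ≤ cont (r :: s) := cont_tail_le hposT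
      have hcl : cont (1 :: r :: s) = cont (r :: s) + cont s := by rw [cont_cons]; ring
      rw [hcl] at hval
      simp only [List.tail_cons] at hval hts
      have hctq : (0:ℚ) < (cont (r::s) : ℚ) := by exact_mod_cast hct
      have htsq : (cont s : ℚ) ≤ (cont (r::s) : ℚ) := by exact_mod_cast hts
      push_cast at hval
      constructor
      · nlinarith [hval]
      · intro h2
        rw [h2] at hval
        have : (cont s : ℚ) = (cont (r::s) : ℚ) := by linarith
        have hZ : cont (r::s).tail = cont (r::s) := by exact_mod_cast this
        have := eq_one_of_cont_tail_eq (by simp) hposT hZ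
        simp [this]

lemma cf_exists_parity {p q : ℤ} (hq : 0 < q) (hlt : q < p) (hlt2 : p < 2*q) :
    (∃ L, IsCF ((p:ℚ)/(q:ℚ)) L ∧ L.head? = some 1 ∧ Even L.length) ∧
    (∃ L, IsCF ((p:ℚ)/(q:ℚ)) L ∧ L.head? = some 1 ∧ Odd L.length) := by
  have hq0 : 1 ≤ q.toNat := by omega
  have hpq : q.toNat < p.toNat := by omega
  obtain ⟨hne, hpos, hval, hlast, hhead⟩ := mkCF_spec q.toNat p.toNat hq0 hpq
  set L₀ := mkCF p.toNat q.toNat with hL₀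
  have hcq : ((q.toNat : ℕ) : ℤ) = q := by omega
  have hcp : ((p.toNat : ℕ) : ℤ) = p := by omega
  rw [hcq, hcp] at hval
  have hdiv : (p.toNat / q.toNat : ℕ) = 1 := by
    have h1 : 1 ≤ p.toNat / q.toNat := (Nat.one_le_div_iff (by omega)).2 (by omega)
    have h2 : p.toNat / q.toNat < 2 := (Nat.div_lt_iff_lt_mul (by omega)).2 (by omega)
    omega
  rw [hdiv] at hhead
  norm_num at hhead
  -- the value of any expansion
  have hiscf : ∀ M : List ℤ, M ≠ [] → (∀ y ∈ M, 0 < y) →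
      (q * cont M = p * cont M.tail) → IsCF ((p:ℚ)/(q:ℚ)) M := by
    intro M h1 h2 h3
    refine ⟨h1, h2, ?_⟩
    have hq0' : (q:ℚ) ≠ 0 := by positivity
    field_simp
    have : ((q * cont M : ℤ) : ℚ) = ((p * cont M.tail : ℤ) : ℚ) := by exact_mod_cast h3
    push_cast at this
    linarith
  have hlen2 : 2 ≤ L₀.length := by
    match hm : L₀ with
    | [] => exact absurd rfl hne
    | [m] =>
      exfalso
      simp [cont] at hval
      have hm1 : m = 1 := by simpa using hhead
      subst hm1
      omega
    | a :: b :: l => simp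
  obtain ⟨f1, f2, f3, f4, f5⟩ := flip_spec hne hpos hlast
  have hiscf0 : IsCF ((p:ℚ)/(q:ℚ)) L₀ := hiscf L₀ hne hpos hval
  have hiscf1 : IsCF ((p:ℚ)/(q:ℚ)) (subLast L₀ ++ [1]) := by
    refine hiscf _ (by simp) f3 ?_
    rw [f1, f2]
    exact hval
  have hhead1 : (subLast L₀ ++ [1]).head? = some 1 := by rw [f5 hlen2]; exact hhead
  rcases Nat.even_or_odd L₀.length with hpar | hpar
  · exact ⟨⟨L₀, hiscf0, hhead, hpar⟩,
      ⟨subLast L₀ ++ [1], hiscf1, hhead1, by rw [f4]; exact Even.add_one hpar⟩⟩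
  · exact ⟨⟨subLast L₀ ++ [1], hiscf1, hhead1, by rw [f4]; exact Odd.add_one hpar⟩,
      ⟨L₀, hiscf0, hhead, hpar⟩⟩

end CF
section Main

lemma disc_eq (g : QF) : g.disc = g.b^2 - 4*g.a*g.c := by simp [QF.disc]

lemma get_e {Δ t u : ℤ} (habs : |t^2 - Δ*u^2| = 4) :
    ∃ e : ℤ, (e = 1 ∨ e = -1) ∧ t^2 - Δ*u^2 = 4*e := by
  rcases (abs_eq (by norm_num : (0:ℤ) ≤ 4)).mp habs with h | h
  · exact ⟨1, Or.inl rfl, by linarith⟩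
  · exact ⟨-1, Or.inr rfl, by linarith⟩

lemma beta_head (g : QF) (hg : g.IsZReduced) :
    (∃ L, g.IsBeta L ∧ L.head? = some 1) ↔ 4*g.a + g.c < 2*g.b := by
  obtain ⟨⟨hΔpos, hΔns⟩, ha, hb, hc, habc⟩ := hg
  have hΔ := disc_eq g
  have hΔpos' : 0 < g.b^2 - 4*g.a*g.c := by rw [← hΔ]; exact hΔpos
  constructor
  · rintro ⟨L, ⟨t, u, ⟨ht, hu, habs, -⟩, hcf, hev, hod⟩, hhead⟩
    obtain ⟨e, he, hpell'⟩ := get_e habs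
    have hpell : t^2 - (g.b^2-4*g.a*g.c)*u^2 = 4*e := by rw [← hΔ]; exact hpell'
    obtain ⟨z, hz⟩ := exists_half (a := g.a) (c := g.c) hpell
    have hzau : g.a*u + 1 ≤ z := keyA ha hc habc ht hu he hpell hz
    have hx : (((t + g.b * u : ℤ) : ℚ) / 2) = ((z : ℤ) : ℚ) := by
      push_cast
      have h2 : (2:ℚ) * (z:ℚ) = (t:ℚ) + (g.b:ℚ)*(u:ℚ) := by exact_mod_cast hz
      linarith
    rw [hx] at hcf
    have hx2 := cf_head_one hcf hhead
    have hden : (0:ℚ) < (z:ℚ) - ((g.a*u : ℤ) : ℚ) := by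
      have h1 : (1:ℚ) ≤ (z:ℚ) - ((g.a*u : ℤ):ℚ) := by
        exact_mod_cast (by omega : (1:ℤ) ≤ z - g.a*u)
      linarith
    have hzle : 2*(g.a*u) ≤ z := by
      have hle := hx2.1
      rw [div_le_iff₀ hden] at hle
      have : ((2*(g.a*u) : ℤ) : ℚ) ≤ (z:ℚ) := by push_cast at hle ⊢; linarith
      exact_mod_cast this
    by_contra hcon
    push_neg at hcon
    have hne0 : 4*g.a - 2*g.b + g.c ≠ 0 := keyNe hΔpos' ht hu he hpell
    have hge1 : 1 ≤ 4*g.a - 2*g.b + g.c := by omega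
    obtain ⟨hzub, hzeq⟩ := keyNeg ha hc habc ht hu he hpell hz hge1
    have hz2 : z = 2*(g.a*u) := by linarith
    have hxval : ((z:ℤ):ℚ) / ((z:ℚ) - ((g.a*u : ℤ):ℚ)) = 2 := by
      have hZq : (z:ℚ) = 2*((g.a*u : ℤ):ℚ) := by exact_mod_cast hz2
      have hau : ((g.a*u : ℤ):ℚ) ≠ 0 := by
        have : (0:ℤ) < g.a*u := mul_pos ha hu
        exact_mod_cast ne_of_gt this
      rw [hZq, show (2:ℚ)*((g.a*u : ℤ):ℚ) - ((g.a*u : ℤ):ℚ) = ((g.a*u : ℤ):ℚ) by ring,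
        mul_div_assoc, div_self hau, mul_one]
    have hL11 := hx2.2 hxval
    have he1 : e = 1 := hzeq (by linarith)
    subst he1
    have hodd : Odd L.length := hod (by rw [hΔ]; linarith)
    rw [hL11] at hodd
    exact (by decide : ¬ Odd 2) (by simpa using hodd)
  · intro harith
    obtain ⟨t, u, hfund⟩ := exists_fundSol hΔpos hΔns
    obtain ⟨ht, hu, habs, hmin⟩ := hfund
    obtain ⟨e, he, hpell'⟩ := get_e habs
    have hpell : t^2 - (g.b^2-4*g.a*g.c)*u^2 = 4*e := by rw [← hΔ]; exact hpell'
    obtain ⟨z, hz⟩ := exists_half (a := g.a) (c := g.c) hpell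
    have hzau : g.a*u + 1 ≤ z := keyA ha hc habc ht hu he hpell hz
    have h1 : 4*g.a - 2*g.b + g.c ≤ -1 := by omega
    obtain ⟨hz2au, hzeq⟩ := keyPos ha hc habc ht hu he hpell hz h1
    have hx : (((t + g.b * u : ℤ) : ℚ) / 2) = ((z : ℤ) : ℚ) := by
      push_cast
      have h2 : (2:ℚ) * (z:ℚ) = (t:ℚ) + (g.b:ℚ)*(u:ℚ) := by exact_mod_cast hz
      linarith
    have hau0 : (0:ℤ) < g.a*u := mul_pos ha hu
    rcases eq_or_lt_of_le hz2au with heq | hlt2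
    · -- z = 2au, e = -1, take L = [1,1]
      have he1 : e = -1 := hzeq (by linarith)
      subst he1
      refine ⟨[1,1], ⟨t, u, ⟨ht, hu, habs, hmin⟩, ?_, ?_, ?_⟩, rfl⟩
      · refine ⟨by simp, ?_, ?_⟩
        · intro q hq
          simp at hq
          omega
        · rw [hx]
          have hZq : (z:ℚ) = 2*((g.a*u : ℤ):ℚ) := by
            exact_mod_cast (by linarith : z = 2*(g.a*u))
          have hau : ((g.a*u : ℤ):ℚ) ≠ 0 := by exact_mod_cast ne_of_gt hau0
          show ((cont [1,1] : ℤ):ℚ) = _ * ((cont [1] : ℤ):ℚ)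
          have hc1 : cont [1,1] = 2 := by simp [cont]
          have hc2 : cont [(1:ℤ)] = 1 := by simp [cont]
          rw [hc1, hc2, hZq, show (2:ℚ)*((g.a*u : ℤ):ℚ) - ((g.a*u : ℤ):ℚ) = ((g.a*u : ℤ):ℚ) by ring,
            mul_div_assoc, div_self hau, mul_one]
          norm_num
      · intro _; simp
      · intro h4
        exfalso
        rw [hΔ] at h4
        linarith
    · -- z > 2au
      have hq0 : 0 < z - g.a*u := by linarith
      have hplt : z < 2*(z - g.a*u) := by linarith
      obtain ⟨hevenEx, hoddEx⟩ := cf_exists_parity (p := z) (q := z - g.a*u)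
        hq0 (by linarith) (by linarith)
      have hEE : (((t + g.b * u : ℤ) : ℚ) / 2) / ((((t + g.b * u : ℤ) : ℚ) / 2) - ((g.a * u : ℤ) : ℚ))
          = ((z:ℤ):ℚ) / (((z - g.a*u : ℤ)):ℚ) := by
        rw [hx]
        push_cast
        ring_nf
      rcases he with rfl | rfl
      · obtain ⟨L, hLcf, hLhead, hLodd⟩ := hoddEx
        refine ⟨L, ⟨t, u, ⟨ht, hu, habs, hmin⟩, ?_, ?_, ?_⟩, hLhead⟩
        · rw [hEE]; exact hLcf
        · intro h4; exfalso; rw [hΔ] at h4; linarith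
        · intro _; exact hLodd
      · obtain ⟨L, hLcf, hLhead, hLeven⟩ := hevenEx
        refine ⟨L, ⟨t, u, ⟨ht, hu, habs, hmin⟩, ?_, ?_, ?_⟩, hLhead⟩
        · rw [hEE]; exact hLcf
        · intro _; exact hLeven
        · intro h4; exfalso; rw [hΔ] at h4; linarith

end Main
section Rev

lemma rev_disc (g : QF) : g.rev.disc = g.disc := by simp [QF.disc, QF.rev]; ring

lemma rev_zred {g : QF} (hg : g.IsZReduced) : g.rev.IsZReduced := by
  obtain ⟨⟨h1, h2⟩, ha, hb, hc, habc⟩ := hg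
  exact ⟨⟨by rw [rev_disc]; exact h1, by rw [rev_disc]; exact h2⟩,
    hc, hb, ha, by simp [QF.rev]; omega⟩

lemma rev_rev (g : QF) : g.rev.rev = g := rfl

lemma beta_rev {g : QF} (hg : g.IsZReduced) {L : List ℤ} (h : g.IsBeta L) :
    g.rev.IsBeta L.reverse := by
  obtain ⟨⟨hΔpos, hΔns⟩, ha, hb, hc, habc⟩ := hg
  have hΔ := disc_eq g
  obtain ⟨t, u, ⟨ht, hu, habs, hmin⟩, hcf, hev, hod⟩ := h
  obtain ⟨e, he, hpell'⟩ := get_e habs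
  have hpell : t^2 - (g.b^2-4*g.a*g.c)*u^2 = 4*e := by rw [← hΔ]; exact hpell'
  have hpellR : t^2 - (g.b^2-4*g.c*g.a)*u^2 = 4*e := by linear_combination hpell
  obtain ⟨z, hz⟩ := exists_half (a := g.a) (c := g.c) hpell
  have hzau : g.a*u + 1 ≤ z := keyA ha hc habc ht hu he hpell hz
  have hzcu : g.c*u + 1 ≤ z := keyA hc ha (by omega) ht hu he hpellR hz
  have hsq := key_sq hpell hz
  have hx : (((t + g.b * u : ℤ) : ℚ) / 2) = ((z : ℤ) : ℚ) := by
    push_cast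
    have h2 : (2:ℚ) * (z:ℚ) = (t:ℚ) + (g.b:ℚ)*(u:ℚ) := by exact_mod_cast hz
    linarith
  rw [hx] at hcf
  obtain ⟨hne, hpos, hval⟩ := hcf
  set p := cont L with hp_def
  set q := cont L.tail with hq_def
  set dl := cont L.dropLast with hdl_def
  have hppos : 0 < p := cont_pos hpos
  have hqpos : 0 < q := cont_pos (fun y hy => hpos y (List.mem_of_mem_tail hy))
  have hdlpos : 0 < dl := cont_pos (fun y hy => hpos y (List.dropLast_subset L hy))
  have hdlle : dl ≤ p := cont_dropLast_le hpos
  have hden : (0:ℚ) < (z:ℚ) - ((g.a*u : ℤ) : ℚ) := by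
    have h1 : (1:ℚ) ≤ (z:ℚ) - ((g.a*u : ℤ):ℚ) := by
      exact_mod_cast (by omega : (1:ℤ) ≤ z - g.a*u)
    linarith
  -- cross-multiplied value equation
  have hint : p * (z - g.a*u) = z * q := by
    rw [div_mul_eq_mul_div, eq_div_iff (ne_of_gt hden)] at hval
    push_cast at hval
    exact_mod_cast hval
  -- parity sign
  have hsign : ((-1:ℤ)) ^ L.length = -e := by
    rcases he with rfl | rfl
    · have hodd : Odd L.length := hod (by rw [hΔ]; linarith)
      rw [hodd.neg_one_pow]
    · have heven : Even L.length := hev (by rw [hΔ]; linarith)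
      rw [heven.neg_one_pow]
      ring
  have hdet : p * innerCont L - dl * q = -e := by
    rw [← hsign]
    exact cont_det hne
  -- coprimality of p and q
  have hcop : IsCoprime p q := by
    rcases he with rfl | rfl
    · exact ⟨-innerCont L, dl, by linarith⟩
    · exact ⟨innerCont L, -dl, by linarith⟩
  -- p divides z
  have hdvdz : p ∣ z := hcop.dvd_of_dvd_mul_right ⟨z - g.a*u, by linarith⟩
  obtain ⟨k, hk⟩ := hdvdz
  have hkq : z - g.a*u = k * q := by
    have h1 : p * (z - g.a*u) = p * (k * q) := by rw [hint, hk]; ring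
    exact mul_left_cancel₀ (ne_of_gt hppos) h1
  have hkpos : 0 < k := by nlinarith
  have hke : e = k * (q*(z - g.c*u) - (g.b-g.a-g.c)*u*p) := by
    linear_combination (z - g.c*u) * hkq - ((g.b-g.a-g.c)*u) * hk - hsq
  have hk1 : k = 1 := by
    have hdvd1 : k ∣ 1 := by
      rcases he with rfl | rfl
      · exact ⟨q*(z - g.c*u) - (g.b-g.a-g.c)*u*p, hke⟩
      · exact ⟨-(q*(z - g.c*u) - (g.b-g.a-g.c)*u*p), by linarith [hke]⟩
    exact Int.eq_one_of_dvd_one (by omega) hdvd1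
  rw [hk1, one_mul] at hkq
  rw [hk1, mul_one] at hk
  -- so z = p and z - au = q
  have hqcu : q * (z - g.c*u) = e + (g.b-g.a-g.c)*u*p := by
    linear_combination (-(z - g.c*u)) * hkq + ((g.b-g.a-g.c)*u) * hk + hsq
  -- p divides q * ((z - cu) - dl)
  have hdvd2 : p ∣ (z - g.c*u) - dl := by
    refine hcop.dvd_of_dvd_mul_left ⟨(g.b-g.a-g.c)*u - innerCont L, ?_⟩
    have : q * ((z - g.c*u) - dl) = q*(z - g.c*u) - dl * q := by ring
    rw [this, hqcu]
    linarith [hdet]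
  have hzcud : (z - g.c*u) - dl = 0 := by
    refine Int.eq_zero_of_abs_lt_dvd hdvd2 ?_
    rw [abs_lt]
    have hcu := mul_pos hc hu
    constructor
    · linarith
    · linarith
  have hzcu' : z - g.c*u = dl := by omega
  -- assemble
  refine ⟨t, u, ?_, ?_, ?_, ?_⟩
  · rw [show g.rev.disc = g.disc from rev_disc g]
    exact ⟨ht, hu, habs, hmin⟩
  · have hbrev : g.rev.b = g.b := rfl
    have harev : g.rev.a = g.c := rfl
    rw [hbrev, harev, hx]
    refine ⟨by simpa using hne, ?_, ?_⟩
    · intro y hy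
      exact hpos y (by simpa using hy)
    · have hcr : cont L.reverse = p := cont_reverse L
      have hcrt : cont L.reverse.tail = dl := cont_reverse_tail hne
      rw [hcr, hcrt]
      have hdlq : ((dl:ℤ):ℚ) = (z:ℚ) - ((g.c*u : ℤ):ℚ) := by
        exact_mod_cast (by omega : (dl:ℤ) = z - g.c*u)
      rw [hdlq]
      have hdenc : (z:ℚ) - ((g.c*u : ℤ):ℚ) ≠ 0 := by
        have h1 : (1:ℚ) ≤ (z:ℚ) - ((g.c*u : ℤ):ℚ) := by
          exact_mod_cast (by omega : (1:ℤ) ≤ z - g.c*u)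
        linarith
      rw [div_mul_cancel₀ _ hdenc]
      exact_mod_cast (by omega : (p:ℤ) = z)
  · intro h4
    rw [List.length_reverse]
    exact hev (by rw [rev_disc] at h4; exact h4)
  · intro h4
    rw [List.length_reverse]
    exact hod (by rw [rev_disc] at h4; exact h4)

end Rev

section Mu

lemma gplus_iff (g : QF) (hg : g.IsZReduced) :
    (∃ f : QF, f.IsGPlus ∧ mu f = g) ↔ 4*g.a + g.c < 2*g.b := by
  obtain ⟨⟨hΔpos, hΔns⟩, ha, hb, hc, habc⟩ := hg
  constructor
  · rintro ⟨f, ⟨⟨hind, hac, habs⟩, hfa⟩, hmu⟩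
    simp only [mu, if_pos hfa] at hmu
    have h1 : g.a = f.a := by rw [← hmu]
    have h2 : g.b = 2*f.a + f.b := by rw [← hmu]
    have h3 : g.c = f.a + f.b + f.c := by rw [← hmu]
    have habs' := abs_lt.mp habs
    omega
  · intro h
    refine ⟨⟨g.a, g.b - 2*g.a, g.a - g.b + g.c⟩, ⟨⟨?_, ?_, ?_⟩, ha⟩, ?_⟩
    · have hd : QF.disc ⟨g.a, g.b - 2*g.a, g.a - g.b + g.c⟩ = g.disc := by
        simp [QF.disc]; ring
      rw [QF.IsIndefinite, hd]
      exact ⟨hΔpos, hΔns⟩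
    · show g.a * (g.a - g.b + g.c) < 0
      exact mul_neg_of_pos_of_neg ha (by omega)
    · show |g.a + (g.a - g.b + g.c)| < g.b - 2*g.a
      rw [abs_lt]
      omega
    · simp only [mu, if_pos (show (0:ℤ) < (⟨g.a, g.b - 2*g.a, g.a - g.b + g.c⟩ : QF).a from ha)]
      rw [QF.mk.injEq]
      exact ⟨rfl, by ring, by ring⟩

lemma gminus_iff (g : QF) (hg : g.IsZReduced) :
    (∃ f : QF, f.IsGMinus ∧ mu f = g) ↔ 4*g.c + g.a < 2*g.b := by
  obtain ⟨⟨hΔpos, hΔns⟩, ha, hb, hc, habc⟩ := hg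
  constructor
  · rintro ⟨f, ⟨⟨hind, hac, habs⟩, hfa⟩, hmu⟩
    simp only [mu, if_neg (by omega : ¬ (0:ℤ) < f.a)] at hmu
    have h1 : g.a = f.a + f.b + f.c := by rw [← hmu]
    have h2 : g.b = f.b + 2*f.c := by rw [← hmu]
    have h3 : g.c = f.c := by rw [← hmu]
    have habs' := abs_lt.mp habs
    omega
  · intro h
    refine ⟨⟨g.a - g.b + g.c, g.b - 2*g.c, g.c⟩, ⟨⟨?_, ?_, ?_⟩, by show g.a - g.b + g.c < 0; omega⟩, ?_⟩
    · have hd : QF.disc ⟨g.a - g.b + g.c, g.b - 2*g.c, g.c⟩ = g.disc := by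
        simp [QF.disc]; ring
      rw [QF.IsIndefinite, hd]
      exact ⟨hΔpos, hΔns⟩
    · show (g.a - g.b + g.c) * g.c < 0
      exact mul_neg_of_neg_of_pos (by omega) hc
    · show |(g.a - g.b + g.c) + g.c| < g.b - 2*g.c
      rw [abs_lt]
      omega
    · simp only [mu, if_neg (show ¬ (0:ℤ) < (⟨g.a - g.b + g.c, g.b - 2*g.c, g.c⟩ : QF).a by
        show ¬ (0:ℤ) < g.a - g.b + g.c; omega)]
      rw [QF.mk.injEq]
      exact ⟨by ring, by ring, rfl⟩

end Mu

/-- **Theorem.** A Z-reduced form `g` lies in `μ(G⁺)` iff `β(g)` begins with 1,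
and in `μ(G⁻)` iff `β(g)` ends with 1. -/
theorem stmt12 (g : QF) (hg : g.IsZReduced) :
    ((∃ f : QF, f.IsGPlus ∧ mu f = g) ↔
      ∃ L : List ℤ, g.IsBeta L ∧ L.head? = some 1) ∧
    ((∃ f : QF, f.IsGMinus ∧ mu f = g) ↔
      ∃ L : List ℤ, g.IsBeta L ∧ L.getLast? = some 1) := by
  have hrev := rev_zred hg
  constructor
  · exact (gplus_iff g hg).trans (beta_head g hg).symm
  · have h1 : (∃ L, g.IsBeta L ∧ L.getLast? = some 1) ↔
        (∃ L, g.rev.IsBeta L ∧ L.head? = some 1) := by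
      constructor
      · rintro ⟨L, hL, hlast⟩
        exact ⟨L.reverse, beta_rev hg hL, by simpa using hlast⟩
      · rintro ⟨L, hL, hhead⟩
        refine ⟨L.reverse, ?_, by simpa using hhead⟩
        have := beta_rev hrev hL
        rwa [rev_rev] at this
    exact (gminus_iff g hg).trans ((beta_head g.rev hrev).symm.trans h1.symm)
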